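/- arXiv:1802.00228 — 4 statements merged into one kernel-verified Lean document; each statement's English description precedes it below -/
import Mathlib

section
/- Let θ0 be real, α ∈ (0,1), x fixed, and let h : ℝ → ℝ be a nonnegative function (θ ↦ f(x|θ)). Suppose the suprema are attained: there exist θp ≥ θ0 with h(θp) = sup_{θ ≥ θ0} h(θ) and θd < θ0 with h(θd) = sup_{θ < θ0} h(θ), and suppose h(θd) > 0. Then the two-point prior π = α·δ_{θp} + (1−α)·δ_{θd} satisfies the quantile restriction π([θ0,∞)) = α, it maximizes ∫ h dπ over all probability measures with that quantile restriction, and the corresponding strength of evidence equals V(x) = (∫_{[θ0,∞)} h dπ / α) / (∫_{(-∞,θ0)} h dπ / (1−α)) = sup_{θ ≥ θ0} h(θ) / sup_{θ < θ0} h(θ). -/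
open MeasureTheory

/-- The two-point prior `π = α·δ_{θp} + (1−α)·δ_{θd}`, where `θp` and `θd` attain the
suprema of `θ ↦ h θ = f(x|θ)` over `[θ0,∞)` and `(-∞,θ0)` respectively, satisfies the
quantile restriction, maximizes the likelihood of the evidence among all priors with
that restriction, and yields strength of evidence equal to the ratio of the two suprema. -/
theorem two_point_prior_maximizes_and_gives_ratio_of_sups
    (θ0 α : ℝ) (hα0 : 0 < α) (hα1 : α < 1)
    (h : ℝ → ℝ) (hmeas : Measurable h) (hnonneg : ∀ θ, 0 ≤ h θ)
    (θp θd : ℝ) (hθp : θ0 ≤ θp) (hθd : θd < θ0)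
    (hmaxp : IsGreatest (h '' Set.Ici θ0) (h θp))
    (hmaxd : IsGreatest (h '' Set.Iio θ0) (h θd))
    (hd_pos : 0 < h θd) :
    let π : Measure ℝ :=
      ENNReal.ofReal α • Measure.dirac θp + ENNReal.ofReal (1 - α) • Measure.dirac θd
    π (Set.Ici θ0) = ENNReal.ofReal α ∧
    (∀ μ : Measure ℝ, IsProbabilityMeasure μ → μ (Set.Ici θ0) = ENNReal.ofReal α →
      ∫ θ, h θ ∂μ ≤ ∫ θ, h θ ∂π) ∧
    ((∫ θ in Set.Ici θ0, h θ ∂π) / α) / ((∫ θ in Set.Iio θ0, h θ ∂π) / (1 - α))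
      = sSup (h '' Set.Ici θ0) / sSup (h '' Set.Iio θ0) := by
  intro π
  have hθdmem : θd ∉ Set.Ici θ0 := by simp [hθd.not_ge]
  have hθpmem : θp ∉ Set.Iio θ0 := by simp [hθp]
  have hα1' : 0 < 1 - α := by linarith
  -- claim 1
  have hpi : π (Set.Ici θ0) = ENNReal.ofReal α := by
    simp [π, Measure.dirac_apply' _ measurableSet_Ici, hθp, hθdmem]
  refine ⟨hpi, ?_, ?_⟩
  · -- maximization
    intro μ hprob hquant
    have hquant' : μ (Set.Iio θ0) = ENNReal.ofReal (1 - α) := by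
      have hc : Set.Iio θ0 = (Set.Ici θ0)ᶜ := by ext y; simp [not_le]
      rw [hc, measure_compl measurableSet_Ici (measure_ne_top _ _), hquant,
        measure_univ]
      rw [ENNReal.ofReal_sub _ hα0.le]
      simp
    -- h is integrable wrt μ
    have hbound : ∀ θ, ‖h θ‖ ≤ max (h θp) (h θd) := by
      intro θ
      rw [Real.norm_of_nonneg (hnonneg θ)]
      rcases le_or_gt θ0 θ with hθ | hθ
      · exact le_max_of_le_left (hmaxp.2 ⟨θ, hθ, rfl⟩)
      · exact le_max_of_le_right (hmaxd.2 ⟨θ, hθ, rfl⟩)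
    have hint : Integrable h μ :=
      Integrable.mono' (integrable_const _) hmeas.aestronglyMeasurable
        (Filter.Eventually.of_forall hbound)
    have hsplit : ∫ θ, h θ ∂μ =
        (∫ θ in Set.Ici θ0, h θ ∂μ) + ∫ θ in Set.Iio θ0, h θ ∂μ := by
      rw [← setIntegral_union]
      · congr 1
        rw [Set.union_comm, Set.Iio_union_Ici]
        exact (Measure.restrict_univ).symm
      · exact Set.disjoint_left.mpr (fun x hx hx' => absurd hx' (by simpa using hx))
      · exact measurableSet_Iio
      · exact hint.integrableOn
      · exact hint.integrableOn
    have h1 : ∫ θ in Set.Ici θ0, h θ ∂μ ≤ α * h θp := by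
      calc ∫ θ in Set.Ici θ0, h θ ∂μ ≤ ∫ _ in Set.Ici θ0, h θp ∂μ := by
            apply setIntegral_mono_on hint.integrableOn ((integrableOn_const_iff).mpr ?_)
              measurableSet_Ici
            · exact fun θ hθ => hmaxp.2 ⟨θ, hθ, rfl⟩
            · right; exact lt_of_le_of_lt (le_of_eq hquant) (by simp)
        _ = α * h θp := by
            rw [setIntegral_const, measureReal_def, hquant, ENNReal.toReal_ofReal hα0.le, smul_eq_mul]
    have h2 : ∫ θ in Set.Iio θ0, h θ ∂μ ≤ (1 - α) * h θd := by
      calc ∫ θ in Set.Iio θ0, h θ ∂μ ≤ ∫ _ in Set.Iio θ0, h θd ∂μ := by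
            apply setIntegral_mono_on hint.integrableOn ((integrableOn_const_iff).mpr ?_)
              measurableSet_Iio
            · exact fun θ hθ => hmaxd.2 ⟨θ, hθ, rfl⟩
            · right; exact lt_of_le_of_lt (le_of_eq hquant') (by simp)
        _ = (1 - α) * h θd := by
            rw [setIntegral_const, measureReal_def, hquant', ENNReal.toReal_ofReal hα1'.le, smul_eq_mul]
    have hip : Integrable h (Measure.dirac θp) :=
      (integrable_const (h θp)).congr (MeasureTheory.ae_eq_dirac h).symm
    have hid : Integrable h (Measure.dirac θd) :=
      (integrable_const (h θd)).congr (MeasureTheory.ae_eq_dirac h).symm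
    have hpi_int : ∫ θ, h θ ∂π = α * h θp + (1 - α) * h θd := by
      rw [show (π : Measure ℝ) = ENNReal.ofReal α • Measure.dirac θp
            + ENNReal.ofReal (1 - α) • Measure.dirac θd from rfl,
        integral_add_measure (hip.smul_measure ENNReal.ofReal_ne_top)
          (hid.smul_measure ENNReal.ofReal_ne_top),
        integral_smul_measure, integral_smul_measure, integral_dirac, integral_dirac,
        ENNReal.toReal_ofReal hα0.le, ENNReal.toReal_ofReal hα1'.le, smul_eq_mul,
        smul_eq_mul]
    rw [hpi_int, hsplit]
    exact add_le_add h1 h2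
  · -- ratio of sups
    classical
    have hseti : ∀ s : Set ℝ, ∫ θ in s, h θ ∂π
        = α * (if θp ∈ s then h θp else 0) + (1 - α) * (if θd ∈ s then h θd else 0) := by
      intro s
      have hip : Integrable h ((Measure.dirac θp).restrict s) :=
        ((integrable_const (h θp)).congr (MeasureTheory.ae_eq_dirac h).symm).restrict
      have hid : Integrable h ((Measure.dirac θd).restrict s) :=
        ((integrable_const (h θd)).congr (MeasureTheory.ae_eq_dirac h).symm).restrict
      rw [show (π : Measure ℝ) = ENNReal.ofReal α • Measure.dirac θp
            + ENNReal.ofReal (1 - α) • Measure.dirac θd from rfl,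
        Measure.restrict_add, Measure.restrict_smul, Measure.restrict_smul,
        integral_add_measure (hip.smul_measure ENNReal.ofReal_ne_top)
          (hid.smul_measure ENNReal.ofReal_ne_top),
        integral_smul_measure, integral_smul_measure,
        setIntegral_dirac h θp s, setIntegral_dirac h θd s,
        ENNReal.toReal_ofReal hα0.le, ENNReal.toReal_ofReal hα1'.le, smul_eq_mul,
        smul_eq_mul]
    have hIci : ∫ θ in Set.Ici θ0, h θ ∂π = α * h θp := by
      rw [hseti]; simp [hθp, hθd.not_ge]
    have hIio : ∫ θ in Set.Iio θ0, h θ ∂π = (1 - α) * h θd := by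
      rw [hseti]; simp [hθd, hθp.not_gt]
    rw [hIci, hIio, hmaxp.csSup_eq, hmaxd.csSup_eq]
    field_simp
end

section
/- Let σ > 0, θ0 ∈ ℝ, c < 0, and g_τ(x) = (1/√(σ²+τ²))·φ((x−θ0+cτ)/√(σ²+τ²)) for τ ≥ 0. If x < θ0 and (x−θ0)² < 3σ²(c²+1)/(c²+3), then the cubic P(τ) = −τ³ + c(x−θ0)τ² + ((x−θ0)² − σ²(c²+1))τ − c(x−θ0)σ² is strictly negative for all τ > 0, and consequently τ ↦ g_τ(x) is strictly decreasing on [0,∞), so its unique maximizer over τ ≥ 0 is τ = 0. -/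
/-- The standard normal density. -/
noncomputable def stdNormalPDF (t : ℝ) : ℝ := Real.exp (-t ^ 2 / 2) / Real.sqrt (2 * Real.pi)

lemma aux_deriv_neg (E K s τ u Q Pv : ℝ) (hE : 0 < E) (hK : 0 < K) (hs : 0 < s)
    (hs2 : s ^ 2 = u) (hu : 0 < u) (hq : Q * u - τ = Pv / u) (hP : Pv < 0) :
    (E * Q * (K * s) - E * (K * (2 * τ / (2 * s)))) / (K * s) ^ 2 < 0 := by
  apply div_neg_of_neg_of_pos _ (by positivity)
  have h1 : E * Q * (K * s) - E * (K * (2 * τ / (2 * s))) = E * K * (Q * s - τ / s) := by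
    field_simp
  rw [h1]
  apply mul_neg_of_pos_of_neg (by positivity)
  have h2 : Q * s - τ / s = (Q * u - τ) / s := by
    rw [← hs2]; field_simp
  rw [h2, hq]
  exact div_neg_of_neg_of_pos (div_neg_of_neg_of_pos hP hu) hs

/-- In the unbalanced case, if `x < θ0` and `(x−θ0)² < 3σ²(c²+1)/(c²+3)`, then the cubic
`P(τ)` is strictly negative for all `τ > 0`, so the marginal likelihood `τ ↦ g_τ(x)` is
strictly decreasing on `[0,∞)` and is maximized over `τ ≥ 0` at `τ = 0`. -/
theorem unbalanced_marginal_likelihood_max_at_zero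
    (σ θ0 c x : ℝ) (hσ : 0 < σ) (hc : c < 0)
    (hx : x < θ0) (hx2 : (x - θ0) ^ 2 < 3 * σ ^ 2 * (c ^ 2 + 1) / (c ^ 2 + 3)) :
    let P : ℝ → ℝ := fun τ => -τ ^ 3 + c * (x - θ0) * τ ^ 2
      + ((x - θ0) ^ 2 - σ ^ 2 * (c ^ 2 + 1)) * τ - c * (x - θ0) * σ ^ 2
    let g : ℝ → ℝ := fun τ => (1 / Real.sqrt (σ ^ 2 + τ ^ 2))
      * stdNormalPDF ((x - θ0 + c * τ) / Real.sqrt (σ ^ 2 + τ ^ 2))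
    (∀ τ : ℝ, 0 < τ → P τ < 0) ∧
    StrictAntiOn g (Set.Ici 0) ∧
    IsMaxOn g (Set.Ici 0) 0 := by
  intro P g
  have hd : x - θ0 < 0 := by linarith
  have ha : 0 < c * (x - θ0) := mul_pos_of_neg_of_neg hc hd
  have hc3 : (0:ℝ) < c ^ 2 + 3 := by positivity
  have hx2' : (x - θ0) ^ 2 * (c ^ 2 + 3) < 3 * σ ^ 2 * (c ^ 2 + 1) := by
    have := (lt_div_iff₀ hc3).mp hx2
    linarith
  have hPneg : ∀ τ : ℝ, 0 < τ → P τ < 0 := by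
    intro τ hτ
    show -τ ^ 3 + c * (x - θ0) * τ ^ 2
      + ((x - θ0) ^ 2 - σ ^ 2 * (c ^ 2 + 1)) * τ - c * (x - θ0) * σ ^ 2 < 0
    nlinarith [mul_nonneg hτ.le (sq_nonneg (2 * τ - c * (x - θ0))),
      mul_pos ha (pow_pos hσ 2), mul_pos hτ ha, sq_nonneg (c * (x - θ0)),
      mul_pos hτ (pow_pos hσ 2)]
  -- the smooth form of g
  have hK : 0 < Real.sqrt (2 * Real.pi) := Real.sqrt_pos.mpr (by positivity)
  have hgh : g = fun τ : ℝ => Real.exp (-(x - θ0 + c * τ) ^ 2 / (2 * (σ ^ 2 + τ ^ 2)))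
      / (Real.sqrt (2 * Real.pi) * Real.sqrt (σ ^ 2 + τ ^ 2)) := by
    funext τ
    have hupos : (0:ℝ) < σ ^ 2 + τ ^ 2 := by positivity
    have hs : 0 < Real.sqrt (σ ^ 2 + τ ^ 2) := Real.sqrt_pos.mpr hupos
    have hs2 : Real.sqrt (σ ^ 2 + τ ^ 2) ^ 2 = σ ^ 2 + τ ^ 2 := Real.sq_sqrt hupos.le
    have harg : -((x - θ0 + c * τ) / Real.sqrt (σ ^ 2 + τ ^ 2)) ^ 2 / 2
        = -(x - θ0 + c * τ) ^ 2 / (2 * (σ ^ 2 + τ ^ 2)) := by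
      rw [div_pow, hs2]; field_simp
    show (1 / Real.sqrt (σ ^ 2 + τ ^ 2))
      * stdNormalPDF ((x - θ0 + c * τ) / Real.sqrt (σ ^ 2 + τ ^ 2)) = _
    simp only [stdNormalPDF]
    rw [harg]
    field_simp
  set h : ℝ → ℝ := fun τ : ℝ => Real.exp (-(x - θ0 + c * τ) ^ 2 / (2 * (σ ^ 2 + τ ^ 2)))
      / (Real.sqrt (2 * Real.pi) * Real.sqrt (σ ^ 2 + τ ^ 2)) with hh
  -- derivative of h
  have hasD : ∀ τ : ℝ, HasDerivAt h
      ((Real.exp (-(x - θ0 + c * τ) ^ 2 / (2 * (σ ^ 2 + τ ^ 2))) *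
          (((-(2 * (x - θ0 + c * τ) * c)) * (2 * (σ ^ 2 + τ ^ 2)) -
            (-(x - θ0 + c * τ) ^ 2) * (2 * (2 * τ))) / (2 * (σ ^ 2 + τ ^ 2)) ^ 2) *
          (Real.sqrt (2 * Real.pi) * Real.sqrt (σ ^ 2 + τ ^ 2)) -
        Real.exp (-(x - θ0 + c * τ) ^ 2 / (2 * (σ ^ 2 + τ ^ 2))) *
          (Real.sqrt (2 * Real.pi) * (2 * τ / (2 * Real.sqrt (σ ^ 2 + τ ^ 2))))) /
        (Real.sqrt (2 * Real.pi) * Real.sqrt (σ ^ 2 + τ ^ 2)) ^ 2) τ := by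
    intro τ
    have hupos : (0:ℝ) < σ ^ 2 + τ ^ 2 := by positivity
    have hW : HasDerivAt (fun τ : ℝ => x - θ0 + c * τ) c τ := by
      simpa using ((hasDerivAt_id τ).const_mul c).const_add (x - θ0)
    have hnum : HasDerivAt (fun τ : ℝ => -(x - θ0 + c * τ) ^ 2)
        (-(2 * (x - θ0 + c * τ) * c)) τ := by
      exact (hW.pow 2).neg.congr_deriv (by simp)
    have hu' : HasDerivAt (fun τ : ℝ => σ ^ 2 + τ ^ 2) (2 * τ) τ := by
      simpa using (hasDerivAt_pow 2 τ).const_add (σ ^ 2)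
    have hden2 : HasDerivAt (fun τ : ℝ => 2 * (σ ^ 2 + τ ^ 2)) (2 * (2 * τ)) τ :=
      hu'.const_mul 2
    have hq : HasDerivAt (fun τ : ℝ => -(x - θ0 + c * τ) ^ 2 / (2 * (σ ^ 2 + τ ^ 2)))
        (((-(2 * (x - θ0 + c * τ) * c)) * (2 * (σ ^ 2 + τ ^ 2)) -
          (-(x - θ0 + c * τ) ^ 2) * (2 * (2 * τ))) / (2 * (σ ^ 2 + τ ^ 2)) ^ 2) τ :=
      hnum.div hden2 (by positivity)
    have hexp := hq.exp
    have hsqrt : HasDerivAt (fun τ : ℝ => Real.sqrt (σ ^ 2 + τ ^ 2))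
        (2 * τ / (2 * Real.sqrt (σ ^ 2 + τ ^ 2))) τ := hu'.sqrt hupos.ne'
    have hden := hsqrt.const_mul (Real.sqrt (2 * Real.pi))
    exact hexp.div hden (by positivity)
  have hcont : Continuous h :=
    continuous_iff_continuousAt.mpr fun τ => (hasD τ).continuousAt
  have hanti : StrictAntiOn h (Set.Ici 0) := by
    apply strictAntiOn_of_deriv_neg (convex_Ici 0) hcont.continuousOn
    intro τ hτ
    rw [interior_Ici] at hτ
    rw [(hasD τ).deriv]
    have hupos : (0:ℝ) < σ ^ 2 + τ ^ 2 := by positivity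
    have hs : 0 < Real.sqrt (σ ^ 2 + τ ^ 2) := Real.sqrt_pos.mpr hupos
    have hs2 : Real.sqrt (σ ^ 2 + τ ^ 2) ^ 2 = σ ^ 2 + τ ^ 2 := Real.sq_sqrt hupos.le
    refine aux_deriv_neg _ _ _ _ _ _ _ (Real.exp_pos _) hK hs hs2 hupos ?_ (hPneg τ hτ)
    show (((-(2 * (x - θ0 + c * τ) * c)) * (2 * (σ ^ 2 + τ ^ 2)) -
        (-(x - θ0 + c * τ) ^ 2) * (2 * (2 * τ))) / (2 * (σ ^ 2 + τ ^ 2)) ^ 2)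
        * (σ ^ 2 + τ ^ 2) - τ
      = (-τ ^ 3 + c * (x - θ0) * τ ^ 2
        + ((x - θ0) ^ 2 - σ ^ 2 * (c ^ 2 + 1)) * τ - c * (x - θ0) * σ ^ 2) / (σ ^ 2 + τ ^ 2)
    field_simp
    ring
  have hganti : StrictAntiOn g (Set.Ici 0) := by
    rw [hgh]; exact hanti
  refine ⟨hPneg, hganti, ?_⟩
  apply isMaxOn_iff.mpr
  intro τ hτ
  rcases eq_or_lt_of_le (Set.mem_Ici.mp hτ) with h0 | h0
  · rw [← h0]
  · exact (hganti Set.self_mem_Ici hτ h0).le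
end

section
/- Let σ > 0, θ0 ∈ ℝ, c < 0, and g_τ(x) = (1/√(σ²+τ²))·φ((x−θ0+cτ)/√(σ²+τ²)) for τ ≥ 0. If x > θ0, then there exists a unique τ* > 0 such that g_{τ*}(x) = sup_{τ ≥ 0} g_τ(x); in particular the maximizer of the marginal likelihood over τ ≥ 0 is strictly positive. -/
lemma hasDerivAt_Laux (σ a c : ℝ) (hσ : 0 < σ) (τ : ℝ) :
    HasDerivAt (fun t => -((a + c*t)^2 / (2*(σ^2+t^2))) - Real.log (σ^2+t^2) / 2)
      ((-τ^3 + a*c*τ^2 + (a^2 - σ^2*(1+c^2))*τ - a*c*σ^2) / (σ^2+τ^2)^2) τ := by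
  have hv : (0:ℝ) < σ^2 + τ^2 := by positivity
  have hm : HasDerivAt (fun t : ℝ => a + c*t) c τ := by
    simpa using ((hasDerivAt_id τ).const_mul c).const_add a
  have hmsq : HasDerivAt (fun t : ℝ => (a + c*t)^2) (2*(a+c*τ)*c) τ := by
    simpa [Pi.pow_def] using hm.pow 2
  have hvd : HasDerivAt (fun t : ℝ => σ^2 + t^2) (2*τ) τ := by
    simpa using (hasDerivAt_pow 2 τ).const_add (σ^2)
  have hden : HasDerivAt (fun t : ℝ => 2*(σ^2+t^2)) (2*(2*τ)) τ := hvd.const_mul 2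
  have hfrac := hmsq.div hden (by positivity)
  have hlog := hvd.log (ne_of_gt hv)
  have h := (hfrac.neg).sub (hlog.div_const 2)
  refine h.congr_deriv ?_
  field_simp
  ring


/-- In the unbalanced case, if `x > θ0` then the marginal likelihood `τ ↦ g_τ(x)` has
a unique maximizer over `τ ≥ 0`, and this maximizer is strictly positive. -/
theorem unbalanced_marginal_likelihood_unique_positive_max
    (σ θ0 c x : ℝ) (hσ : 0 < σ) (hc : c < 0) (hx : θ0 < x) :
    let g : ℝ → ℝ := fun τ => (1 / Real.sqrt (σ ^ 2 + τ ^ 2))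
      * stdNormalPDF ((x - θ0 + c * τ) / Real.sqrt (σ ^ 2 + τ ^ 2))
    ∃ τstar : ℝ, 0 < τstar ∧ IsMaxOn g (Set.Ici 0) τstar ∧
      ∀ τ ∈ Set.Ici (0 : ℝ), IsMaxOn g (Set.Ici 0) τ → τ = τstar := by
  intro g
  have hgdef : ∀ t : ℝ, g t = (1 / Real.sqrt (σ ^ 2 + t ^ 2))
      * stdNormalPDF ((x - θ0 + c * t) / Real.sqrt (σ ^ 2 + t ^ 2)) := fun _ => rfl
  obtain ⟨a, ha_def⟩ : ∃ a : ℝ, a = x - θ0 := ⟨_, rfl⟩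
  rw [← ha_def] at hgdef
  have ha : 0 < a := by rw [ha_def]; linarith
  have hac : a * c < 0 := mul_neg_of_pos_of_neg ha hc
  have hv : ∀ t : ℝ, (0:ℝ) < σ^2 + t^2 := fun t => by positivity
  set L : ℝ → ℝ := fun t => -((a + c*t)^2 / (2*(σ^2+t^2))) - Real.log (σ^2+t^2) / 2 with hLdef
  set Nf : ℝ → ℝ := fun t => -t^3 + a*c*t^2 + (a^2 - σ^2*(1+c^2))*t - a*c*σ^2 with hNf
  have hLd : ∀ t : ℝ, HasDerivAt L (Nf t / (σ^2+t^2)^2) t := fun t =>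
    hasDerivAt_Laux σ a c hσ t
  have hLderiv : ∀ t : ℝ, deriv L t = Nf t / (σ^2+t^2)^2 := fun t => (hLd t).deriv
  have hLcont : Continuous L := by
    have : Differentiable ℝ L := fun t => (hLd t).differentiableAt
    exact this.continuous
  -- g in terms of L
  have hgL : ∀ t : ℝ, g t = Real.exp (L t) / Real.sqrt (2*Real.pi) := by
    intro t
    have hvt := hv t
    have hsv : 0 < Real.sqrt (σ^2+t^2) := Real.sqrt_pos.mpr hvt
    have e1 : -((a + c * t) / Real.sqrt (σ ^ 2 + t ^ 2)) ^ 2 / 2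
        = -((a + c*t)^2 / (2*(σ^2+t^2))) := by
      rw [div_pow, Real.sq_sqrt hvt.le, neg_div, div_div, mul_comm (σ^2+t^2) 2]
    have e3 : Real.exp (Real.log (σ^2+t^2) / 2) = Real.sqrt (σ^2+t^2) := by
      rw [← Real.log_sqrt hvt.le, Real.exp_log hsv]
    rw [hgdef t]
    simp only [stdNormalPDF, hLdef]
    rw [e1, Real.exp_sub, e3]
    ring
  -- positivity facts
  have hN0 : 0 < Nf 0 := by
    simp only [hNf]
    nlinarith [mul_pos (neg_pos.mpr hac) (pow_pos hσ 2)]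
  -- existence of root via IVT
  obtain ⟨b, hb⟩ : ∃ b : ℝ, b = a^2 - σ^2*(1+c^2) := ⟨_, rfl⟩
  obtain ⟨d, hd_def⟩ : ∃ d : ℝ, d = -(a*c*σ^2) := ⟨_, rfl⟩
  have hd : 0 < d := by
    rw [hd_def]
    nlinarith [mul_pos (neg_pos.mpr hac) (pow_pos hσ 2)]
  obtain ⟨T, hT⟩ : ∃ T : ℝ, T = 1 + |b| + d := ⟨_, rfl⟩
  have hT1 : (1:ℝ) ≤ T := by
    have := abs_nonneg b
    rw [hT]; linarith
  have hNT : Nf T < 0 := by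
    have h1 : b ≤ |b| := le_abs_self b
    have h2 : T^2 ≥ T * (1 + |b| + d) := by nlinarith [abs_nonneg b]
    have h3 : T^3 ≥ T^2 := by nlinarith [abs_nonneg b]
    have h4 : a*c*T^2 ≤ 0 := by nlinarith [sq_nonneg T]
    have hgoal : Nf T = -T^3 + a*c*T^2 + b*T + d := by
      simp only [hNf]; rw [hb, hd_def]; ring
    rw [hgoal]
    nlinarith [abs_nonneg b]
  have hcontN : ContinuousOn Nf (Set.Icc 0 T) := by
    apply Continuous.continuousOn; simp only [hNf]; fun_prop
  obtain ⟨t, htmem, hNt⟩ := intermediate_value_Icc' (by linarith : (0:ℝ) ≤ T) hcontN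
    ⟨hNT.le, hN0.le⟩
  have ht : 0 < t := by
    rcases lt_or_eq_of_le htmem.1 with h | h
    · exact h
    · exfalso; rw [← h] at hNt; exact hN0.ne' hNt
  -- sign of Nf
  have hfact : ∀ y : ℝ, Nf y = (y - t) * (-(y^2 + y*t + t^2) + a*c*(y+t) + b) + Nf t := by
    intro y; simp only [hNf, hb]; ring
  have hQ0 : -(0^2 + 0*t + t^2) + a*c*(0+t) + b < 0 := by
    have h := hfact 0
    rw [hNt] at h
    nlinarith [hN0]
  have hQ : ∀ y : ℝ, 0 ≤ y → -(y^2 + y*t + t^2) + a*c*(y+t) + b < 0 := by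
    intro y hy
    nlinarith [hQ0, sq_nonneg y, mul_nonneg ht.le hy, mul_nonneg hy (neg_nonneg.mpr hac.le)]
  have hNpos : ∀ y : ℝ, 0 ≤ y → y < t → 0 < Nf y := by
    intro y hy hyt
    rw [hfact y, hNt, add_zero]
    exact mul_pos_of_neg_of_neg (by linarith) (hQ y hy)
  have hNneg : ∀ y : ℝ, t < y → Nf y < 0 := by
    intro y hyt
    rw [hfact y, hNt, add_zero]
    exact mul_neg_of_pos_of_neg (by linarith) (hQ y (by linarith))
  -- monotonicity of L
  have hmono : StrictMonoOn L (Set.Icc 0 t) := by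
    apply strictMonoOn_of_deriv_pos (convex_Icc 0 t) hLcont.continuousOn
    intro y hy
    rw [interior_Icc] at hy
    rw [hLderiv y]
    exact div_pos (hNpos y hy.1.le hy.2) (by positivity)
  have hanti : StrictAntiOn L (Set.Ici t) := by
    apply strictAntiOn_of_deriv_neg (convex_Ici t) hLcont.continuousOn
    intro y hy
    rw [interior_Ici] at hy
    rw [hLderiv y]
    exact div_neg_of_neg_of_pos (hNneg y hy) (by positivity)
  -- comparisons of g via L
  have hgle : ∀ y1 y2 : ℝ, L y1 ≤ L y2 → g y1 ≤ g y2 := by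
    intro y1 y2 h
    rw [hgL y1, hgL y2]
    gcongr
  have hglt : ∀ y1 y2 : ℝ, L y1 < L y2 → g y1 < g y2 := by
    intro y1 y2 h
    rw [hgL y1, hgL y2]
    gcongr
  refine ⟨t, ht, ?_, ?_⟩
  · intro y hy
    simp only [Set.mem_setOf_eq]
    rcases le_or_gt y t with hyt | hyt
    · exact hgle y t ((hmono.monotoneOn) ⟨hy, hyt⟩ ⟨(Set.mem_Ici.mp hy).trans hyt, le_refl t⟩ hyt)
    · exact hgle y t ((hanti (Set.mem_Ici.mpr le_rfl) (Set.mem_Ici.mpr hyt.le) hyt).le)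
  · intro τ hτ hmax
    by_contra hne
    have hlt : g τ < g t := by
      rcases lt_or_gt_of_ne hne with h | h
      · exact hglt τ t (hmono ⟨hτ, h.le⟩ ⟨(Set.mem_Ici.mp hτ).trans h.le, le_refl t⟩ h)
      · exact hglt τ t (hanti (Set.mem_Ici.mpr le_rfl) (Set.mem_Ici.mpr h.le) h)
    exact absurd (hmax (Set.mem_Ici.mpr ht.le)) (not_le.mpr hlt)
end

section
/- Assume the evidence has a N(θ,σ²) distribution with σ > 0 known, the prior is N(μ,τ²), and α = P(H_p) > 0.5, so the quantile restriction gives μ = θ0 − cτ with c = Φ^{−1}(1−α) < 0. Then there exists x0 < θ0 such that for every x ∈ [x0, θ0], the marginal likelihood g_τ(x) = (1/√(σ²+τ²))·φ((x−θ0+cτ)/√(σ²+τ²)) satisfies g_τ(x) < g_0(x) for all τ > 0 (so the maximum likelihood estimate of τ is 0 and the resulting strength of evidence equals one on [x0, θ0]). -/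
/-- The standard normal cumulative distribution function. -/
noncomputable def stdNormalCDF (y : ℝ) : ℝ := ∫ t in Set.Iic y, stdNormalPDF t


open MeasureTheory Real Set

lemma stdNormalPDF_eq (t : ℝ) : stdNormalPDF t = Real.exp (-(1/2) * t ^ 2) / Real.sqrt (2 * Real.pi) := by
  unfold stdNormalPDF; ring_nf

lemma integrable_stdNormalPDF : Integrable stdNormalPDF := by
  have h : Integrable (fun t : ℝ => Real.exp (-(1/2) * t ^ 2)) :=
    integrable_exp_neg_mul_sq (by norm_num)
  have h2 := h.div_const (Real.sqrt (2 * Real.pi))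
  exact h2.congr (by filter_upwards with t using (stdNormalPDF_eq t).symm)

lemma integral_stdNormalPDF : ∫ t, stdNormalPDF t = 1 := by
  have h : ∫ t : ℝ, Real.exp (-(1/2) * t ^ 2) = Real.sqrt (2 * Real.pi) := by
    rw [integral_gaussian, show Real.pi / (1/2) = 2 * Real.pi by ring]
  have hsq : Real.sqrt (2 * Real.pi) ≠ 0 := by positivity
  calc ∫ t, stdNormalPDF t = (∫ t : ℝ, Real.exp (-(1/2) * t ^ 2)) / Real.sqrt (2 * Real.pi) := by
        rw [← integral_div]; exact integral_congr_ae (by filter_upwards with t using stdNormalPDF_eq t)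
    _ = 1 := by rw [h, div_self hsq]

lemma stdNormalCDF_zero : stdNormalCDF 0 = 1 / 2 := by
  have hInt := integrable_stdNormalPDF
  have hIic : IntegrableOn stdNormalPDF (Iic (0:ℝ)) := hInt.integrableOn
  have hIoi : IntegrableOn stdNormalPDF (Ioi (0:ℝ)) := hInt.integrableOn
  have hIci : IntegrableOn stdNormalPDF (Ici (0:ℝ)) := hInt.integrableOn
  have hsum : (∫ t in Iic (0:ℝ), stdNormalPDF t) + ∫ t in Ioi (0:ℝ), stdNormalPDF t = 1 := by
    rw [intervalIntegral.integral_Iic_add_Ioi hIic hIoi, integral_stdNormalPDF]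
  have hsymm : (∫ t in Iic (0:ℝ), stdNormalPDF t) = ∫ t in Ioi (0:ℝ), stdNormalPDF t := by
    have h := integral_comp_neg_Iic (c := (0:ℝ)) (f := stdNormalPDF)
    rw [neg_zero] at h
    rw [← h]
    refine setIntegral_congr_fun measurableSet_Iic (fun t _ => ?_)
    unfold stdNormalPDF; rw [neg_pow]; norm_num
  unfold stdNormalCDF
  linarith [hsum, hsymm]

/-- In the unbalanced case `α = P(H_p) > 1/2` (so `c = Φ⁻¹(1−α) < 0` and the quantile
restriction gives `μ = θ0 − cτ`), there is an `x0 < θ0` such that for all evidence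
values `x ∈ [x0, θ0]` the marginal likelihood `g_τ(x)` is strictly below `g_0(x)` for
every `τ > 0`; hence the maximum likelihood estimate of `τ` is `0` and the strength of
evidence equals one on `[x0, θ0]`. -/
theorem unbalanced_flat_part
    (σ θ0 α c : ℝ) (hσ : 0 < σ) (hα : 1 / 2 < α)
    (hc : stdNormalCDF c = 1 - α) :
    ∃ x0 : ℝ, x0 < θ0 ∧ ∀ x ∈ Set.Icc x0 θ0, ∀ τ : ℝ, 0 < τ →
      (1 / Real.sqrt (σ ^ 2 + τ ^ 2))
          * stdNormalPDF ((x - θ0 + c * τ) / Real.sqrt (σ ^ 2 + τ ^ 2))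
        < (1 / σ) * stdNormalPDF ((x - θ0) / σ) := by
  -- first, c < 0
  have hc0 : c < 0 := by
    by_contra h
    push_neg at h
    have hmono : stdNormalCDF 0 ≤ stdNormalCDF c := by
      unfold stdNormalCDF
      apply setIntegral_mono_set integrable_stdNormalPDF.integrableOn
      · filter_upwards with t
        unfold stdNormalPDF
        positivity
      · exact HasSubset.Subset.eventuallyLE (Iic_subset_Iic.mpr h)
    rw [stdNormalCDF_zero, hc] at hmono
    linarith
  refine ⟨θ0 + c * σ, by nlinarith, fun x hx τ hτ => ?_⟩
  obtain ⟨hx1, hx2⟩ := hx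
  set s := Real.sqrt (σ ^ 2 + τ ^ 2) with hs_def
  have hs2 : s ^ 2 = σ ^ 2 + τ ^ 2 := Real.sq_sqrt (by positivity)
  have hs0 : 0 ≤ s := Real.sqrt_nonneg _
  have hτ2 : 0 < τ ^ 2 := by positivity
  have hsσ : σ < s := by nlinarith [hs2, hs0, hτ2]
  have hs : 0 < s := hσ.trans hsσ
  have hd1 : x - θ0 ≤ 0 := by linarith
  have hd2 : c * σ ≤ x - θ0 := by linarith
  -- key quadratic inequality
  have hkey : ((x - θ0) / σ) ^ 2 ≤ ((x - θ0 + c * τ) / s) ^ 2 := by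
    rw [div_pow, div_pow, div_le_div_iff₀ (by positivity) (by positivity), hs2]
    have hsq : (x - θ0) ^ 2 ≤ c ^ 2 * σ ^ 2 := by nlinarith
    have hB : 0 ≤ (x - θ0) * c := by nlinarith
    nlinarith [mul_nonneg hB (mul_pos hτ (mul_pos hσ hσ)).le,
      mul_le_mul_of_nonneg_right hsq (sq_nonneg τ)]
  have hexp : Real.exp (-((x - θ0 + c * τ) / s) ^ 2 / 2) ≤
      Real.exp (-((x - θ0) / σ) ^ 2 / 2) := by
    apply Real.exp_le_exp.2
    linarith
  unfold stdNormalPDF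
  have hE : 0 < Real.exp (-((x - θ0) / σ) ^ 2 / 2) / Real.sqrt (2 * Real.pi) := by positivity
  calc 1 / s * (Real.exp (-((x - θ0 + c * τ) / s) ^ 2 / 2) / Real.sqrt (2 * Real.pi))
      ≤ 1 / s * (Real.exp (-((x - θ0) / σ) ^ 2 / 2) / Real.sqrt (2 * Real.pi)) := by
        apply mul_le_mul_of_nonneg_left _ (by positivity)
        exact div_le_div_of_nonneg_right hexp (by positivity)
    _ < 1 / σ * (Real.exp (-((x - θ0) / σ) ^ 2 / 2) / Real.sqrt (2 * Real.pi)) := by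
        exact mul_lt_mul_of_pos_right (by exact one_div_lt_one_div_of_lt hσ hsσ) hE
end
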